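/- Suppose 𝔄 = {A_n}_{n≥1} is admissible, f : ω × ω → ω is associative (so (ω, f) is a semigroup), and f is an 𝔄-operation. Then the operation f_*^𝔄 on the set β𝔄 of 𝔄-ultrafilters is associative, i.e., (β𝔄, f_*^𝔄) is a semigroup. -/

import Mathlib

/-- A field of sets over `S`: a nonempty collection of subsets of `S` closed under
finite unions, finite intersections and complementation. -/
def IsFieldOfSets {S : Type*} (A : Set (Set S)) : Prop :=
  A.Nonempty ∧ (∀ X ∈ A, ∀ Y ∈ A, X ∪ Y ∈ A) ∧ (∀ X ∈ A, ∀ Y ∈ A, X ∩ Y ∈ A) ∧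
    ∀ X ∈ A, Xᶜ ∈ A

/-- `U` is an ultrafilter on the field of sets `A`. -/
def IsUltraOn {S : Type*} (A U : Set (Set S)) : Prop :=
  U ⊆ A ∧ (∀ X ∈ U, ∀ Y ∈ U, X ∩ Y ∈ U) ∧ Set.univ ∈ U ∧ ∅ ∉ U ∧
    ∀ X ∈ A, X ∈ U ∨ Xᶜ ∈ U

/-- An admissible family `𝔄 = {A_n}_{n ≥ 1}` of fields of sets over `ω^n`:
each `A (n+1)` is a field of sets over `Fin (n+1) → ℕ`, the family is closed under
cyclic shifts `(a₁,…,aₙ) ↦ (a₂,…,aₙ,a₁)` of coordinates, and under slices obtained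
by fixing the first coordinate.  (The value `A 0` is irrelevant.) -/
def Adm (A : ∀ n : ℕ, Set (Set (Fin n → ℕ))) : Prop :=
  (∀ n : ℕ, IsFieldOfSets (A (n + 1))) ∧
  (∀ n : ℕ, ∀ X ∈ A (n + 2),
      (fun a : Fin (n + 2) → ℕ => Fin.snoc (Fin.tail a) (a 0)) '' X ∈ A (n + 2)) ∧
  (∀ n : ℕ, ∀ X ∈ A (n + 2), ∀ c : ℕ,
      {t : Fin (n + 1) → ℕ | (Fin.cons c t : Fin (n + 2) → ℕ) ∈ X} ∈ A (n + 1))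

/-- `U` is an `𝔄`-ultrafilter: an ultrafilter on `A 1` satisfying the Fubini property:
for every `n ≥ 1` and `X ∈ A (n+1)`,
`{(a₁,…,aₙ) : {a_{n+1} : (a₁,…,a_{n+1}) ∈ X} ∈ U} ∈ A n`. -/
def IsAUltra (A : ∀ n : ℕ, Set (Set (Fin n → ℕ))) (U : Set (Set (Fin 1 → ℕ))) : Prop :=
  IsUltraOn (A 1) U ∧
  ∀ n : ℕ, ∀ X ∈ A (n + 2),
    {a : Fin (n + 1) → ℕ |
      {t : Fin 1 → ℕ | (Fin.snoc a (t 0) : Fin (n + 2) → ℕ) ∈ X} ∈ U} ∈ A (n + 1)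

/-- `f` is an (`m`-ary) `𝔄`-operation: for every `n ≥ 1` and `X ∈ A n`, the set
`{(a₁,…,a_{n+m-1}) : (a₁,…,a_{n-1}, f(a_n,…,a_{n+m-1})) ∈ X}` belongs to `A (n+m-1)`. -/
def IsAOp (A : ∀ n : ℕ, Set (Set (Fin n → ℕ))) {m : ℕ} (f : (Fin m → ℕ) → ℕ) : Prop :=
  ∀ p : ℕ, ∀ X ∈ A (p + 1),
    {b : Fin (p + m) → ℕ |
      (Fin.snoc (fun i : Fin p => b (Fin.castAdd m i))
          (f (fun j : Fin m => b (Fin.natAdd p j))) : Fin (p + 1) → ℕ) ∈ X}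
      ∈ A (p + m)


/-- The Fubini product ultrafilter `U ⊗ V` on `A 2`:
`U ⊗ V = {Y ∈ A 2 : {a : {b : (a,b) ∈ Y} ∈ V} ∈ U}`. -/
def otimes2 (A : ∀ n : ℕ, Set (Set (Fin n → ℕ))) (U V : Set (Set (Fin 1 → ℕ))) :
    Set (Set (Fin 2 → ℕ)) :=
  {Y ∈ A 2 | {a : Fin 1 → ℕ |
      {b : Fin 1 → ℕ | (Fin.snoc a (b 0) : Fin 2 → ℕ) ∈ Y} ∈ V} ∈ U}

/-- For a binary operation `f` on `ω`, `f_*^𝔄(U,V) = {X ∈ A 1 : f⁻¹[X] ∈ U ⊗ V}`. -/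
def fStar2 (A : ∀ n : ℕ, Set (Set (Fin n → ℕ))) (f : ℕ → ℕ → ℕ)
    (U V : Set (Set (Fin 1 → ℕ))) : Set (Set (Fin 1 → ℕ)) :=
  {X ∈ A 1 | {x : Fin 2 → ℕ | (fun _ : Fin 1 => f (x 0) (x 1)) ∈ X} ∈ otimes2 A U V}

namespace Stmt9Aux

variable {A : ∀ n : ℕ, Set (Set (Fin n → ℕ))} {U V W : Set (Set (Fin 1 → ℕ))}
variable {f : ℕ → ℕ → ℕ}

/-- The preimage of `X` under the binary operation. -/
def PreF (f : ℕ → ℕ → ℕ) (X : Set (Fin 1 → ℕ)) : Set (Fin 2 → ℕ) :=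
  {x : Fin 2 → ℕ | (fun _ : Fin 1 => f (x 0) (x 1)) ∈ X}

/-- The outer test set used in the characterization of `fStar2`. -/
def NN (f : ℕ → ℕ → ℕ) (V : Set (Set (Fin 1 → ℕ))) (X : Set (Fin 1 → ℕ)) :
    Set (Fin 1 → ℕ) :=
  {a : Fin 1 → ℕ | {t : Fin 1 → ℕ | (fun _ : Fin 1 => f (a 0) (t 0)) ∈ X} ∈ V}

lemma univ_mem (hA : Adm A) (n : ℕ) : (Set.univ : Set (Fin (n+1) → ℕ)) ∈ A (n+1) := by
  obtain ⟨⟨X, hX⟩, hU, _, hC⟩ := hA.1 n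
  have := hU X hX Xᶜ (hC X hX)
  simpa using this

lemma up_mem (hU : IsUltraOn (A 1) U) {X Y : Set (Fin 1 → ℕ)}
    (hX : X ∈ U) (hYA : Y ∈ A 1) (h : X ⊆ Y) : Y ∈ U := by
  rcases hU.2.2.2.2 Y hYA with hy | hy
  · exact hy
  · exfalso
    have h2 : X ∩ Yᶜ ∈ U := hU.2.1 X hX Yᶜ hy
    have h3 : X ∩ Yᶜ = ∅ := by
      apply Set.eq_empty_of_subset_empty
      intro x hx
      exact hx.2 (h hx.1)
    exact hU.2.2.2.1 (h3 ▸ h2)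

lemma snoc_cons1 (a t : Fin 1 → ℕ) :
    (Fin.snoc a (t 0) : Fin 2 → ℕ) = Fin.cons (a 0) t := by
  funext i
  fin_cases i <;> rfl

lemma cons_tail_snoc {n : ℕ} (a : Fin (n+2) → ℕ) (x : ℕ) :
    (Fin.snoc a x : Fin (n+3) → ℕ) = Fin.cons (a 0) (Fin.snoc (Fin.tail a) x) := by
  rw [Fin.cons_snoc_eq_snoc_cons, Fin.cons_self_tail]

lemma slice1 (hA : Adm A) : ∀ n, ∀ X ∈ A (n+2), ∀ a : Fin (n+1) → ℕ,
    {t : Fin 1 → ℕ | (Fin.snoc a (t 0) : Fin (n+2) → ℕ) ∈ X} ∈ A 1 := by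
  intro n
  induction n with
  | zero =>
    intro X hX a
    have h := hA.2.2 0 X hX (a 0)
    convert h using 1
    ext t
    simp only [Set.mem_setOf_eq, snoc_cons1]
  | succ n ih =>
    intro X hX a
    have hY := hA.2.2 (n+1) X hX (a 0)
    have h := ih _ hY (Fin.tail a)
    convert h using 1
    ext t
    simp only [Set.mem_setOf_eq, cons_tail_snoc]

lemma snoc_cons2 (a : Fin 1 → ℕ) (x : Fin 2 → ℕ) :
    (Fin.snoc (Fin.snoc a (x 0) : Fin 2 → ℕ) (x 1) : Fin 3 → ℕ) = Fin.cons (a 0) x := by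
  funext i
  fin_cases i <;> rfl

lemma slice2 (hA : Adm A) : ∀ n, ∀ X ∈ A (n+3), ∀ a : Fin (n+1) → ℕ,
    {x : Fin 2 → ℕ | (Fin.snoc (Fin.snoc a (x 0)) (x 1) : Fin (n+3) → ℕ) ∈ X} ∈ A 2 := by
  intro n
  induction n with
  | zero =>
    intro X hX a
    have h := hA.2.2 1 X hX (a 0)
    convert h using 1
    ext x
    simp only [Set.mem_setOf_eq, snoc_cons2]
  | succ n ih =>
    intro X hX a
    have hY := hA.2.2 (n+2) X hX (a 0)
    have h := ih _ hY (Fin.tail a)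
    convert h using 1
    ext x
    simp only [Set.mem_setOf_eq]
    have he : (Fin.snoc (Fin.snoc a (x 0)) (x 1) : Fin (n+4) → ℕ)
        = Fin.cons (a 0) (Fin.snoc (Fin.snoc (Fin.tail a) (x 0)) (x 1)) := by
      rw [Fin.cons_snoc_eq_snoc_cons, Fin.cons_snoc_eq_snoc_cons, Fin.cons_self_tail]
    rw [he]

lemma k1 {n : ℕ} (a : Fin (n+1) → ℕ) (x0 x1 : ℕ) :
    (fun i : Fin (n+1) =>
      (Fin.snoc (Fin.snoc a x0 : Fin (n+2) → ℕ) x1 : Fin (n+3) → ℕ) (Fin.castAdd 2 i)) = a := by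
  funext i
  have h : (Fin.castAdd 2 i : Fin (n+3)) = Fin.castSucc (Fin.castSucc i) := rfl
  rw [h, Fin.snoc_castSucc, Fin.snoc_castSucc]

lemma k2 {n : ℕ} (a : Fin (n+1) → ℕ) (x0 x1 : ℕ) :
    (Fin.snoc (Fin.snoc a x0 : Fin (n+2) → ℕ) x1 : Fin (n+3) → ℕ)
      (Fin.natAdd (n+1) (0 : Fin 2)) = x0 := by
  have h : (Fin.natAdd (n+1) (0 : Fin 2) : Fin (n+3)) = Fin.castSucc (Fin.last (n+1)) := by
    apply Fin.ext; simp
  rw [h, Fin.snoc_castSucc, Fin.snoc_last]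

lemma k3 {n : ℕ} (a : Fin (n+1) → ℕ) (x0 x1 : ℕ) :
    (Fin.snoc (Fin.snoc a x0 : Fin (n+2) → ℕ) x1 : Fin (n+3) → ℕ)
      (Fin.natAdd (n+1) (1 : Fin 2)) = x1 := by
  have h : (Fin.natAdd (n+1) (1 : Fin 2) : Fin (n+3)) = Fin.last (n+2) := by
    apply Fin.ext; simp
  rw [h, Fin.snoc_last]

lemma snoc0 (g : Fin 0 → ℕ) (c : ℕ) : (Fin.snoc g c : Fin 1 → ℕ) = fun _ => c := by
  funext i
  fin_cases i
  rfl

lemma preF_mem (hf : IsAOp A (fun x : Fin 2 → ℕ => f (x 0) (x 1)))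
    {X : Set (Fin 1 → ℕ)} (hX : X ∈ A 1) : PreF f X ∈ A 2 := by
  have h := hf 0 X hX
  convert h using 1
  ext x
  simp only [PreF, Set.mem_setOf_eq]
  apply iff_of_eq
  congr 1

lemma mem_fStar_iff (hf : IsAOp A (fun x : Fin 2 → ℕ => f (x 0) (x 1)))
    {X : Set (Fin 1 → ℕ)} :
    X ∈ fStar2 A f U V ↔ X ∈ A 1 ∧ NN f V X ∈ U := by
  constructor
  · rintro ⟨h1, _, h3⟩
    exact ⟨h1, h3⟩
  · rintro ⟨h1, h2⟩
    exact ⟨h1, preF_mem hf h1, h2⟩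

lemma NN_memA1 (hA : Adm A) (hf : IsAOp A (fun x : Fin 2 → ℕ => f (x 0) (x 1)))
    (hV : IsAUltra A V) {X : Set (Fin 1 → ℕ)} (hX : X ∈ A 1) : NN f V X ∈ A 1 := by
  have h := hV.2 0 (PreF f X) (preF_mem hf hX)
  exact h

lemma Ia_memA1 (hA : Adm A) (hf : IsAOp A (fun x : Fin 2 → ℕ => f (x 0) (x 1)))
    {X : Set (Fin 1 → ℕ)} (hX : X ∈ A 1) (a : Fin 1 → ℕ) :
    {t : Fin 1 → ℕ | (fun _ : Fin 1 => f (a 0) (t 0)) ∈ X} ∈ A 1 := by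
  have h := slice1 hA 0 (PreF f X) (preF_mem hf hX) a
  exact h

lemma fStar_ultraOn (hA : Adm A) (hf : IsAOp A (fun x : Fin 2 → ℕ => f (x 0) (x 1)))
    (hU : IsAUltra A U) (hV : IsAUltra A V) : IsUltraOn (A 1) (fStar2 A f U V) := by
  obtain ⟨hU1, -⟩ := hU
  have hV1 := hV.1
  refine ⟨fun X hX => hX.1, ?_, ?_, ?_, ?_⟩
  · intro X hX Y hY
    rw [mem_fStar_iff hf] at hX hY ⊢
    have hXY : X ∩ Y ∈ A 1 := (hA.1 0).2.2.1 X hX.1 Y hY.1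
    refine ⟨hXY, ?_⟩
    refine up_mem hU1 (hU1.2.1 _ hX.2 _ hY.2) (NN_memA1 hA hf hV hXY) ?_
    rintro a ⟨ha1, ha2⟩
    exact hV1.2.1 _ ha1 _ ha2
  · rw [mem_fStar_iff hf]
    refine ⟨univ_mem hA 0, ?_⟩
    have h : NN f V (Set.univ : Set (Fin 1 → ℕ)) = Set.univ :=
      Set.eq_univ_of_forall fun a => hV1.2.2.1
    rw [h]
    exact hU1.2.2.1
  · intro h
    rw [mem_fStar_iff hf] at h
    have h2 : NN f V (∅ : Set (Fin 1 → ℕ)) = ∅ :=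
      Set.eq_empty_iff_forall_notMem.mpr fun a ha => hV1.2.2.2.1 ha
    rw [h2] at h
    exact hU1.2.2.2.1 h.2
  · intro X hXA
    have hc : Xᶜ ∈ A 1 := (hA.1 0).2.2.2 X hXA
    have hNX : NN f V X ∈ A 1 := NN_memA1 hA hf hV hXA
    rcases hU1.2.2.2.2 _ hNX with h | h
    · exact Or.inl ((mem_fStar_iff hf).mpr ⟨hXA, h⟩)
    · refine Or.inr ((mem_fStar_iff hf).mpr ⟨hc, ?_⟩)
      refine up_mem hU1 h (NN_memA1 hA hf hV hc) ?_
      intro a ha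
      rcases hV1.2.2.2.2 _ (Ia_memA1 hA hf hXA a) with h2 | h2
      · exact absurd h2 ha
      · exact h2

/-- The set obtained by applying `f` to the last two coordinates. -/
def Wset (f : ℕ → ℕ → ℕ) {n : ℕ} (X : Set (Fin (n+2) → ℕ)) : Set (Fin (n+3) → ℕ) :=
  {b : Fin (n+3) → ℕ |
    (Fin.snoc (fun i : Fin (n+1) => b (Fin.castAdd 2 i))
        (f (b (Fin.natAdd (n+1) (0 : Fin 2))) (b (Fin.natAdd (n+1) (1 : Fin 2))))
      : Fin (n+2) → ℕ) ∈ X}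

lemma fStar_fubini (hA : Adm A) (hf : IsAOp A (fun x : Fin 2 → ℕ => f (x 0) (x 1)))
    (hU : IsAUltra A U) (hV : IsAUltra A V) :
    ∀ n : ℕ, ∀ X ∈ A (n + 2),
      {a : Fin (n + 1) → ℕ |
        {t : Fin 1 → ℕ | (Fin.snoc a (t 0) : Fin (n + 2) → ℕ) ∈ X} ∈ fStar2 A f U V}
        ∈ A (n + 1) := by
  intro n X hX
  have hW1 : Wset f X ∈ A (n+3) := hf (n+1) X hX
  have hZ := hV.2 (n+1) (Wset f X) hW1
  have hS := hU.2 n _ hZ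
  convert hS using 1
  ext a
  simp only [Set.mem_setOf_eq]
  rw [mem_fStar_iff hf]
  have h1 : {t : Fin 1 → ℕ | (Fin.snoc a (t 0) : Fin (n+2) → ℕ) ∈ X} ∈ A 1 :=
    slice1 hA n X hX a
  rw [and_iff_right h1]
  have hEq : NN f V {t : Fin 1 → ℕ | (Fin.snoc a (t 0) : Fin (n+2) → ℕ) ∈ X}
      = {s : Fin 1 → ℕ |
          {t : Fin 1 → ℕ | (Fin.snoc (Fin.snoc a (s 0)) (t 0) : Fin (n+3) → ℕ)
            ∈ Wset f X} ∈ V} := by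
    ext s
    simp only [NN, Set.mem_setOf_eq]
    have hInner : {t : Fin 1 → ℕ | (Fin.snoc a (f (s 0) (t 0)) : Fin (n+2) → ℕ) ∈ X}
        = {t : Fin 1 → ℕ | (Fin.snoc (Fin.snoc a (s 0)) (t 0) : Fin (n+3) → ℕ)
            ∈ Wset f X} := by
      ext t
      simp only [Wset, Set.mem_setOf_eq, k1, k2, k3]
    rw [hInner]
  rw [hEq]

lemma NN_assoc (hA : Adm A) (hassoc : ∀ a b c : ℕ, f (f a b) c = f a (f b c))
    (hf : IsAOp A (fun x : Fin 2 → ℕ => f (x 0) (x 1)))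
    {X : Set (Fin 1 → ℕ)} (hX : X ∈ A 1) :
    NN f (fStar2 A f V W) X = NN f V (NN f W X) := by
  ext a
  show {t : Fin 1 → ℕ | (fun _ : Fin 1 => f (a 0) (t 0)) ∈ X} ∈ fStar2 A f V W ↔ _
  rw [mem_fStar_iff hf, and_iff_right (Ia_memA1 hA hf hX a)]
  have hKey : NN f W {t : Fin 1 → ℕ | (fun _ : Fin 1 => f (a 0) (t 0)) ∈ X}
      = {t : Fin 1 → ℕ | (fun _ : Fin 1 => f (a 0) (t 0)) ∈ NN f W X} := by
    ext s
    simp only [NN, Set.mem_setOf_eq]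
    have hInner : {t : Fin 1 → ℕ | (fun _ : Fin 1 => f (a 0) (f (s 0) (t 0))) ∈ X}
        = {t : Fin 1 → ℕ | (fun _ : Fin 1 => f (f (a 0) (s 0)) (t 0)) ∈ X} := by
      ext t
      have h : (fun _ : Fin 1 => f (f (a 0) (s 0)) (t 0))
          = (fun _ : Fin 1 => f (a 0) (f (s 0) (t 0))) := by
        funext
        rw [hassoc]
      simp only [Set.mem_setOf_eq]
      rw [h]
    rw [hInner]
  rw [hKey]
  rfl

theorem stmt9' (hA : Adm A)
    (hassoc : ∀ a b c : ℕ, f (f a b) c = f a (f b c))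
    (hf : IsAOp A (fun x : Fin 2 → ℕ => f (x 0) (x 1))) :
    (∀ U V : Set (Set (Fin 1 → ℕ)), IsAUltra A U → IsAUltra A V →
      IsAUltra A (fStar2 A f U V)) ∧
    ∀ U V W : Set (Set (Fin 1 → ℕ)), IsAUltra A U → IsAUltra A V → IsAUltra A W →
      fStar2 A f (fStar2 A f U V) W = fStar2 A f U (fStar2 A f V W) := by
  constructor
  · intro U V hU hV
    exact ⟨fStar_ultraOn hA hf hU hV, fStar_fubini hA hf hU hV⟩
  · intro U V W hU hV hW
    ext X
    have e1 : X ∈ fStar2 A f (fStar2 A f U V) W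
        ↔ (X ∈ A 1 ∧ (NN f W X ∈ A 1 ∧ NN f V (NN f W X) ∈ U)) := by
      rw [mem_fStar_iff hf]
      rw [mem_fStar_iff hf]
    have e2 : X ∈ fStar2 A f U (fStar2 A f V W)
        ↔ (X ∈ A 1 ∧ NN f (fStar2 A f V W) X ∈ U) := mem_fStar_iff hf
    rw [e1, e2]
    constructor
    · rintro ⟨h1, -, h3⟩
      exact ⟨h1, by rw [NN_assoc hA hassoc hf h1]; exact h3⟩
    · rintro ⟨h1, h3⟩
      exact ⟨h1, NN_memA1 hA hf hW h1, by rw [← NN_assoc hA hassoc hf h1]; exact h3⟩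

end Stmt9Aux

/-- If `(ω, f)` is a semigroup and `f` is an `𝔄`-operation, then `(β𝔄, f_*^𝔄)` is a
semigroup: `f_*^𝔄` maps `𝔄`-ultrafilters to `𝔄`-ultrafilters and is associative. -/
theorem stmt9 (A : ∀ n : ℕ, Set (Set (Fin n → ℕ))) (hA : Adm A)
    (f : ℕ → ℕ → ℕ) (hassoc : ∀ a b c : ℕ, f (f a b) c = f a (f b c))
    (hf : IsAOp A (fun x : Fin 2 → ℕ => f (x 0) (x 1))) :
    (∀ U V : Set (Set (Fin 1 → ℕ)), IsAUltra A U → IsAUltra A V →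
      IsAUltra A (fStar2 A f U V)) ∧
    ∀ U V W : Set (Set (Fin 1 → ℕ)), IsAUltra A U → IsAUltra A V → IsAUltra A W →
      fStar2 A f (fStar2 A f U V) W = fStar2 A f U (fStar2 A f V W) :=
  Stmt9Aux.stmt9' hA hassoc hf
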